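/- Let n ≥ 1 and let m = p₁·p₂·⋯·p_l be a squarefree positive integer with p₁, …, p_l distinct primes. The number of sublattices Λ of ℤ^n such that ℤ^n/Λ is a cyclic group of order m equals ∏_{k=1}^{l} (p_k^n − 1)/(p_k − 1). -/

import Mathlib

open Function LinearMap

-- L1: two linear maps to ZMod m with nested kernels differ by a scalar
lemma aux_L1 {M : Type*} [AddCommGroup M] [Module ℤ M] {m : ℕ} [NeZero m]
    (f g : M →ₗ[ℤ] ZMod m) (hg : Surjective g) (hker : ker g ≤ ker f) :
    ∃ a : ZMod m, ∀ x, f x = a * g x := by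
  obtain ⟨x₀, hx₀⟩ := hg 1
  refine ⟨f x₀, fun x => ?_⟩
  have h1 : x - ((g x).val : ℤ) • x₀ ∈ ker g := by
    rw [LinearMap.mem_ker, map_sub, map_zsmul, hx₀, zsmul_eq_mul, mul_one,
      Int.cast_natCast, ZMod.natCast_rightInverse, sub_self]
  have h2 := hker h1
  rw [LinearMap.mem_ker, map_sub, map_zsmul, sub_eq_zero] at h2
  rw [h2, zsmul_eq_mul, Int.cast_natCast, ZMod.natCast_rightInverse, mul_comm]

-- L3: characterization of cyclic quotients of order m
lemma aux_P_iff {M : Type*} [AddCommGroup M] [Module ℤ M] {m : ℕ} [NeZero m]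
    (Λ : Submodule ℤ M) :
    (∃ f : M →ₗ[ℤ] ZMod m, Surjective f ∧ ker f = Λ) ↔
      (IsAddCyclic (M ⧸ Λ) ∧ Nat.card (M ⧸ Λ) = m) := by
  constructor
  · rintro ⟨f, hf, hk⟩
    have hle : Λ ≤ ker f := hk.ge
    have hsurj : Surjective (Submodule.liftQ Λ f hle) := by
      intro y
      obtain ⟨x, hx⟩ := hf y
      exact ⟨Submodule.Quotient.mk x, by rwa [Submodule.liftQ_apply]⟩
    have hinj : Injective (Submodule.liftQ Λ f hle) := by
      intro a b hab
      obtain ⟨x, rfl⟩ := Submodule.Quotient.mk_surjective Λ a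
      obtain ⟨y, rfl⟩ := Submodule.Quotient.mk_surjective Λ b
      rw [Submodule.liftQ_apply, Submodule.liftQ_apply] at hab
      rw [Submodule.Quotient.eq, ← hk, LinearMap.mem_ker, map_sub, sub_eq_zero]
      exact hab
    have eA : (M ⧸ Λ) ≃+ ZMod m :=
      AddEquiv.mk' (Equiv.ofBijective _ ⟨hinj, hsurj⟩) (map_add (Submodule.liftQ Λ f hle))
    refine ⟨isAddCyclic_of_surjective eA.symm eA.symm.surjective, ?_⟩
    rw [Nat.card_congr eA.toEquiv, Nat.card_zmod]
  · rintro ⟨h1, h2⟩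
    have e0 := zmodAddCyclicAddEquiv h1
    rw [h2] at e0
    refine ⟨{ toFun := fun x => e0.symm (Λ.mkQ x), map_add' := fun x y => (by simp only [map_add]),
              map_smul' := fun c x => (map_intCast_smul (e0.symm.toAddMonoidHom.comp Λ.mkQ.toAddMonoidHom) ℤ ℤ c x) },
      e0.symm.surjective.comp Λ.mkQ_surjective, ?_⟩
    ext x
    simp only [LinearMap.mem_ker, LinearMap.comp_apply, AddMonoidHom.coe_toIntLinearMap,
      AddEquiv.coe_toAddMonoidHom, Submodule.mkQ_apply, LinearMap.coe_mk, AddHom.coe_mk]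
    rw [EmbeddingLike.map_eq_zero_iff]
    exact Submodule.Quotient.mk_eq_zero ..

lemma aux_card_decomp {M : Type*} [AddCommGroup M] [Module ℤ M] (m : ℕ) [NeZero m] :
    Nat.card {f : M →ₗ[ℤ] ZMod m // Surjective f} =
      Nat.card {Λ : Submodule ℤ M // ∃ f : M →ₗ[ℤ] ZMod m, Surjective f ∧ ker f = Λ} *
      Nat.card {a : ZMod m // IsUnit a} := by
  rw [← Nat.card_prod]
  apply Nat.card_congr
  have hch : ∀ Λ : {Λ : Submodule ℤ M // ∃ f : M →ₗ[ℤ] ZMod m, Surjective f ∧ ker f = Λ},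
      ∃ f : M →ₗ[ℤ] ZMod m, Surjective f ∧ ker f = Λ.1 := fun Λ => Λ.2
  choose c hc1 hc2 using hch
  choose x₀ hx₀ using fun Λ => hc1 Λ 1
  have hker : ∀ Λ (a : {a : ZMod m // IsUnit a}), ker ((a : ZMod m) • c Λ) = Λ.1 := by
    intro Λ a
    ext x
    rw [LinearMap.mem_ker, LinearMap.smul_apply, smul_eq_mul, a.2.mul_right_eq_zero,
      ← hc2 Λ, LinearMap.mem_ker]
  have hBsurj : ∀ Λ (a : {a : ZMod m // IsUnit a}), Surjective ((a : ZMod m) • c Λ) := by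
    intro Λ a y
    obtain ⟨x, hx⟩ := hc1 Λ ((↑a.2.unit⁻¹ : ZMod m) * y)
    refine ⟨x, ?_⟩
    rw [LinearMap.smul_apply, smul_eq_mul, hx, ← mul_assoc, a.2.mul_val_inv, one_mul]
  refine (Equiv.ofBijective
    (fun t : _ × {a : ZMod m // IsUnit a} => ⟨(t.2 : ZMod m) • c t.1, hBsurj t.1 t.2⟩)
    ⟨?_, ?_⟩).symm
  · rintro ⟨t1, t2⟩ ⟨s1, s2⟩ heq
    have hmaps : (t2 : ZMod m) • c t1 = (s2 : ZMod m) • c s1 := congrArg Subtype.val heq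
    have h1 : t1 = s1 := Subtype.ext (by rw [← hker t1 t2, ← hker s1 s2, hmaps])
    subst h1
    have h2 := DFunLike.congr_fun hmaps (x₀ t1)
    rw [LinearMap.smul_apply, LinearMap.smul_apply, smul_eq_mul, smul_eq_mul, hx₀,
      mul_one, mul_one] at h2
    exact Prod.ext rfl (Subtype.ext h2)
  · intro f
    have hP : ∃ g : M →ₗ[ℤ] ZMod m, Surjective g ∧ ker g = ker f.1 := ⟨f.1, f.2, rfl⟩
    obtain ⟨a, ha⟩ := aux_L1 f.1 (c ⟨ker f.1, hP⟩) (hc1 ⟨ker f.1, hP⟩) (hc2 ⟨ker f.1, hP⟩).le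
    have haU : IsUnit a := by
      obtain ⟨y, hy⟩ := f.2 1
      exact IsUnit.of_mul_eq_one (c ⟨ker f.1, hP⟩ y) (by rw [← ha y, hy])
    refine ⟨(⟨ker f.1, hP⟩, ⟨a, haU⟩), ?_⟩
    apply Subtype.ext
    apply LinearMap.ext
    intro x
    rw [LinearMap.smul_apply, smul_eq_mul]
    exact (ha x).symm

-- count of surjections onto ZMod q for q prime
lemma aux_card_surj_prime (n q : ℕ) (hq : q.Prime) :
    Nat.card {f : (Fin n → ℤ) →ₗ[ℤ] ZMod q // Surjective f} = q ^ n - 1 := by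
  haveI : Fact q.Prime := ⟨hq⟩
  have hiff : ∀ v : Fin n → ZMod q,
      Surjective ((Pi.basisFun ℤ (Fin n)).constr ℤ v) ↔ v ≠ 0 := by
    intro v
    rw [← LinearMap.range_eq_top, Module.Basis.constr_range]
    constructor
    · intro h hv0
      subst hv0
      have hle : Submodule.span ℤ (Set.range (0 : Fin n → ZMod q)) ≤ ⊥ :=
        Submodule.span_le.2 (by rintro x ⟨i, rfl⟩; simp)
      rw [h, top_le_iff] at hle
      exact one_ne_zero (Submodule.mem_bot ℤ |>.1 (hle ▸ Submodule.mem_top (x := (1 : ZMod q))))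
    · intro hv
      obtain ⟨i, hi⟩ := Function.ne_iff.1 hv
      rw [Submodule.eq_top_iff']
      intro b
      have hb : ((b * (v i)⁻¹).val : ℤ) • v i = b := by
        rw [zsmul_eq_mul, Int.cast_natCast, ZMod.natCast_rightInverse, mul_assoc,
          inv_mul_cancel₀ hi, mul_one]
      exact hb ▸ Submodule.smul_mem _ _ (Submodule.subset_span ⟨i, rfl⟩)
  have e1 : {v : Fin n → ZMod q // v ≠ 0} ≃
      {f : (Fin n → ℤ) →ₗ[ℤ] ZMod q // Surjective f} :=
    (Equiv.subtypeEquiv ((Pi.basisFun ℤ (Fin n)).constr ℤ).toEquiv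
      (fun v => (hiff v).symm)).symm.symm
  rw [← Nat.card_congr e1, Nat.card_eq_fintype_card, Fintype.card_subtype_compl,
    Fintype.card_subtype_eq, Fintype.card_fun, ZMod.card, Fintype.card_fin]

-- if all coordinate maps to distinct prime fields are surjective, the map to the product is
lemma aux_surj_pi {M : Type*} [AddCommGroup M] [Module ℤ M] {l : ℕ} (p : Fin l → ℕ)
    (hp : ∀ k, (p k).Prime) (hinj : Injective p) (g : M →ₗ[ℤ] ∀ k, ZMod (p k))
    (h : ∀ k, Surjective ((LinearMap.proj k : (∀ k, ZMod (p k)) →ₗ[ℤ] ZMod (p k)) ∘ₗ g)) :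
    Surjective g := by
  haveI : ∀ k, Fact (p k).Prime := fun k => ⟨hp k⟩
  rw [← LinearMap.range_eq_top]
  set N := LinearMap.range g with hN
  have h1 : ∀ k, p k ∣ Nat.card N := by
    intro k
    have hsurj : Surjective (((LinearMap.proj k : (∀ k, ZMod (p k)) →ₗ[ℤ] ZMod (p k)) ∘ₗ
        N.subtype).toAddMonoidHom) := by
      intro y
      obtain ⟨x, hx⟩ := h k y
      exact ⟨⟨g x, LinearMap.mem_range_self g x⟩, hx⟩
    have := AddSubgroup.card_dvd_of_surjective _ hsurj
    rwa [Nat.card_zmod] at this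
  have h2 : (∏ k, p k) ∣ Nat.card N := by
    classical
    have himg : ∏ q ∈ Finset.image p Finset.univ, q = ∏ k, p k :=
      Finset.prod_image (fun a _ b _ hab => hinj hab)
    rw [← himg]
    refine Finset.prod_primes_dvd _ (fun q hq => ?_) (fun q hq => ?_) <;>
      · simp only [Finset.mem_image] at hq ⊢
        obtain ⟨k, -, rfl⟩ := hq
        first
          | exact (hp k).prime
          | exact h1 k
  have h3 : Nat.card N ∣ ∏ k, p k := by
    have hd : Nat.card N.toAddSubgroup ∣ Nat.card (∀ k, ZMod (p k)) :=
      AddSubgroup.card_addSubgroup_dvd_card _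
    rw [Nat.card_pi] at hd
    simp only [Nat.card_zmod] at hd
    exact hd
  have hcard : Nat.card N.toAddSubgroup = ∏ k, p k := Nat.dvd_antisymm h3 h2
  have htop : N.toAddSubgroup = ⊤ := by
    apply AddSubgroup.eq_top_of_card_eq
    rw [hcard, Nat.card_pi]
    simp only [Nat.card_zmod]
  rw [Submodule.eq_top_iff']
  intro x
  have hx : x ∈ N.toAddSubgroup := htop ▸ AddSubgroup.mem_top x
  exact hx

lemma aux_card_surj_prod (n l : ℕ) (p : Fin l → ℕ) (hp : ∀ k, (p k).Prime)
    (hinj : Injective p) :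
    Nat.card {f : (Fin n → ℤ) →ₗ[ℤ] ZMod (∏ k, p k) // Surjective f} =
      ∏ k, (p k ^ n - 1) := by
  haveI : ∀ k, Fact (p k).Prime := fun k => ⟨hp k⟩
  haveI : NeZero (∏ k, p k) := ⟨(Finset.prod_pos (fun k _ => (hp k).pos)).ne'⟩
  have hcop : Pairwise (Nat.Coprime on p) := fun i j hij =>
    (Nat.coprime_primes (hp i) (hp j)).2 fun h => hij (hinj h)
  have eLE := (ZMod.prodEquivPi p hcop).toAddEquiv.toIntLinearEquiv (modM := inferInstance) (modM₂ := inferInstance)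
  have C1 : {f : (Fin n → ℤ) →ₗ[ℤ] ZMod (∏ k, p k) // Surjective f} ≃
      {g : (Fin n → ℤ) →ₗ[ℤ] ∀ k, ZMod (p k) // Surjective g} :=
    { toFun := fun f => ⟨eLE.toLinearMap ∘ₗ f.1, eLE.surjective.comp f.2⟩
      invFun := fun g => ⟨eLE.symm.toLinearMap ∘ₗ g.1, eLE.symm.surjective.comp g.2⟩
      left_inv := fun f => Subtype.ext (by ext x; simp)
      right_inv := fun g => Subtype.ext (by ext x; simp) }
  have C2 : {g : (Fin n → ℤ) →ₗ[ℤ] ∀ k, ZMod (p k) // Surjective g} ≃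
      ∀ k, {h : (Fin n → ℤ) →ₗ[ℤ] ZMod (p k) // Surjective h} :=
    { toFun := fun g k => ⟨(LinearMap.proj k : (∀ k, ZMod (p k)) →ₗ[ℤ] ZMod (p k)) ∘ₗ g.1,
        (Function.surjective_eval _).comp g.2⟩
      invFun := fun h => ⟨LinearMap.pi (fun k => (h k).1),
        aux_surj_pi p hp hinj _ (fun k => by rw [LinearMap.proj_pi]; exact (h k).2)⟩
      left_inv := fun g => Subtype.ext (LinearMap.ext fun x => funext fun k => rfl)
      right_inv := fun h => funext fun k => Subtype.ext (LinearMap.proj_pi _ _) }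
  rw [Nat.card_congr (C1.trans C2), Nat.card_pi]
  exact Finset.prod_congr rfl fun k _ => aux_card_surj_prime n (p k) (hp k)

lemma aux_card_units (l : ℕ) (p : Fin l → ℕ) (hp : ∀ k, (p k).Prime)
    (hinj : Injective p) :
    Nat.card {a : ZMod (∏ k, p k) // IsUnit a} = ∏ k, (p k - 1) := by
  haveI : ∀ k, Fact (p k).Prime := fun k => ⟨hp k⟩
  haveI : NeZero (∏ k, p k) := ⟨(Finset.prod_pos (fun k _ => (hp k).pos)).ne'⟩
  have hcop : Pairwise (Nat.Coprime on p) := fun i j hij =>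
    (Nat.coprime_primes (hp i) (hp j)).2 fun h => hij (hinj h)
  have E := ZMod.prodEquivPi p hcop
  have hPiUnit : ∀ b : ∀ k, ZMod (p k), IsUnit b ↔ ∀ k, IsUnit (b k) := by
    intro b
    constructor
    · intro hb k
      exact hb.map (Pi.evalMonoidHom (fun k => ZMod (p k)) k)
    · intro hb
      refine isUnit_iff_exists_inv.2 ⟨fun k => ((hb k).unit⁻¹ : _), funext fun k => ?_⟩
      exact (hb k).mul_val_inv
  have C : {a : ZMod (∏ k, p k) // IsUnit a} ≃ ∀ k, {x : ZMod (p k) // x ≠ 0} :=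
    (Equiv.subtypeEquiv E.toEquiv (fun a => by
        constructor
        · intro ha; exact ha.map E.toRingHom
        · intro ha
          have := ha.map E.symm.toRingHom
          simpa using this)).trans
      ((Equiv.subtypeEquivRight (fun b => by
          rw [hPiUnit b]
          exact forall_congr' fun k => isUnit_iff_ne_zero)).trans
        Equiv.subtypePiEquivPi)
  rw [Nat.card_congr C, Nat.card_pi]
  refine Finset.prod_congr rfl fun k _ => ?_
  rw [Nat.card_eq_fintype_card, Fintype.card_subtype_compl, Fintype.card_subtype_eq, ZMod.card]

/-- Let n ≥ 1 and m = p₁⋯p_l squarefree with p₁, …, p_l distinct primes. The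
number of sublattices Λ of ℤ^n with ℤ^n/Λ cyclic of order m equals ∏_k (p_k^n − 1)/(p_k − 1). -/
theorem stmt16 (n : ℕ) (hn : 1 ≤ n) (l : ℕ) (p : Fin l → ℕ)
    (hp : ∀ k, (p k).Prime) (hinj : Function.Injective p) :
    Nat.card {Λ : Submodule ℤ (Fin n → ℤ) //
        IsAddCyclic ((Fin n → ℤ) ⧸ Λ) ∧ Nat.card ((Fin n → ℤ) ⧸ Λ) = ∏ k, p k} =
      ∏ k, (p k ^ n - 1) / (p k - 1) := by
  haveI : NeZero (∏ k, p k) := ⟨(Finset.prod_pos (fun k _ => (hp k).pos)).ne'⟩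
  have hdecomp := aux_card_decomp (M := Fin n → ℤ) (∏ k, p k)
  rw [aux_card_surj_prod n l p hp hinj, aux_card_units l p hp hinj,
    Nat.card_congr (Equiv.subtypeEquivRight fun Λ => aux_P_iff Λ)] at hdecomp
  have hdiv : ∀ k, (p k - 1) ∣ (p k ^ n - 1) := fun k => by
    simpa using Nat.sub_dvd_pow_sub_pow (p k) 1 n
  have hpos : 0 < ∏ k, (p k - 1) :=
    Finset.prod_pos fun k _ => tsub_pos_of_lt (hp k).one_lt
  apply Nat.eq_of_mul_eq_mul_right hpos
  rw [← Finset.prod_mul_distrib]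
  calc Nat.card {Λ : Submodule ℤ (Fin n → ℤ) //
        IsAddCyclic ((Fin n → ℤ) ⧸ Λ) ∧ Nat.card ((Fin n → ℤ) ⧸ Λ) = ∏ k, p k} *
          ∏ k, (p k - 1) = ∏ k, (p k ^ n - 1) := hdecomp.symm
    _ = ∏ k, (p k ^ n - 1) / (p k - 1) * (p k - 1) :=
        (Finset.prod_congr rfl fun k _ => (Nat.div_mul_cancel (hdiv k)).symm)
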